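/- There exists an absolute constant C > 0 such that for every nonnegative ω ∈ L¹(Π) ∩ L²(Π), the kinetic energy satisfies E(ω) ≤ C ‖ω‖_{L¹(Π)}^{3/2} ‖ω‖_{L²(Π)}^{1/2}. -/

import Mathlib

open MeasureTheory Real Filter

noncomputable section

/-- The upper half plane `Π = {x ∈ ℝ² : x₂ > 0}`. -/
def UHP : Set (ℝ × ℝ) := {x | 0 < x.2}

/-- Euclidean norm of a point of `ℝ²`. -/
def rad (x : ℝ × ℝ) : ℝ := Real.sqrt (x.1 ^ 2 + x.2 ^ 2)

/-- Modified Bessel function of the second kind of order `0`: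
`K₀(r) = ∫₀^∞ exp(-r cosh t) dt`. -/
def K0 (r : ℝ) : ℝ := ∫ t in Set.Ioi (0 : ℝ), Real.exp (-(r * Real.cosh t))

/-- Fundamental solution `G(x,y) = (1/2π) K₀(|x-y|)` of `−Δ + Id` on `ℝ²`. -/
def Gker (x y : ℝ × ℝ) : ℝ := (1 / (2 * Real.pi)) * K0 (rad (x - y))

/-- Reflection `x̄ = (x₁, −x₂)` across the `x₁`-axis. -/
def reflPt (x : ℝ × ℝ) : ℝ × ℝ := (x.1, -x.2)

/-- Green's function `G_Π(x,y) = G(x,y) − G(x̄,y)` of `−Δ + Id` on the half plane. -/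
def GUHP (x y : ℝ × ℝ) : ℝ := Gker x y - Gker (reflPt x) y

/-- The operator `𝒢ω(x) = ∫_Π G_Π(x,y) ω(y) dy`. -/
def Gop (ω : ℝ × ℝ → ℝ) (x : ℝ × ℝ) : ℝ := ∫ y in UHP, GUHP x y * ω y

/-- Kinetic energy `E(ω) = (1/2) ∫_Π ω 𝒢ω`. -/
def kineticE (ω : ℝ × ℝ → ℝ) : ℝ := (1 / 2) * ∫ x in UHP, ω x * Gop ω x

/-- Impulse `I(ω) = ∫_Π x₂ ω dx`. -/
def impulse (ω : ℝ × ℝ → ℝ) : ℝ := ∫ x in UHP, x.2 * ω x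

/-- `L¹(Π)` norm. -/
def normL1 (f : ℝ × ℝ → ℝ) : ℝ := ∫ x in UHP, |f x|

/-- `L²(Π)` norm. -/
def normL2 (f : ℝ × ℝ → ℝ) : ℝ := (∫ x in UHP, (f x) ^ 2) ^ ((1 : ℝ) / 2)

/-- `L^s(Π)` norm. -/
def normLs (s : ℝ) (f : ℝ × ℝ → ℝ) : ℝ := (∫ x in UHP, |f x| ^ s) ^ (1 / s)

/-- Nonnegative member of `L¹(Π) ∩ L²(Π)`. -/
def NonnegL1L2 (ω : ℝ × ℝ → ℝ) : Prop :=
  (∀ x ∈ UHP, 0 ≤ ω x) ∧ IntegrableOn ω UHP ∧ IntegrableOn (fun x => (ω x) ^ 2) UHP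

/-- Steiner symmetry in the `x₁` variable. -/
def SteinerSym (f : ℝ × ℝ → ℝ) : Prop :=
  (∀ x : ℝ × ℝ, f (-x.1, x.2) = f x) ∧
  ∀ x₂ : ℝ, 0 < x₂ → AntitoneOn (fun x₁ => f (x₁, x₂)) (Set.Ioi (0 : ℝ))

/-- The admissible class `𝒜_{μ,ν}`. -/
def InAdm (μ ν : ℝ) (ω : ℝ × ℝ → ℝ) : Prop :=
  (∀ x ∈ UHP, 0 ≤ ω x) ∧ IntegrableOn ω UHP ∧ IntegrableOn (fun x => (ω x) ^ 2) UHP ∧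
  IntegrableOn (fun x => x.2 * ω x) UHP ∧
  impulse ω = μ ∧ (∫ x in UHP, ω x) ≤ ν

/-- The energy functional `ℰ_λ(ω) = E(ω) − (1/(2λ)) ∫_Π ω²`. -/
def Efun (lam : ℝ) (ω : ℝ × ℝ → ℝ) : ℝ :=
  kineticE ω - (1 / (2 * lam)) * ∫ x in UHP, (ω x) ^ 2

/-- The supremum `S_{μ,ν,λ} = sup_{ω ∈ 𝒜_{μ,ν}} ℰ_λ(ω)`. -/
def Sval (lam μ ν : ℝ) : ℝ := sSup {s | ∃ ω, InAdm μ ν ω ∧ s = Efun lam ω}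

/-- `ω` is a maximizer, i.e. `ω ∈ Σ_{μ,ν,λ}`. -/
def IsMaximizer (lam μ ν : ℝ) (ω : ℝ × ℝ → ℝ) : Prop :=
  InAdm μ ν ω ∧ Efun lam ω = Sval lam μ ν

/-- Bessel function of the first kind of order one. -/
def J1 (r : ℝ) : ℝ :=
  ∑' k : ℕ, ((-1 : ℝ) ^ k / ((Nat.factorial k : ℝ) * (Nat.factorial (k + 1) : ℝ))) *
    (r / 2) ^ (2 * k + 1)

/-- Modified Bessel function of the second kind of order one. -/
def K1 (r : ℝ) : ℝ := ∫ t in Set.Ioi (0 : ℝ), Real.exp (-(r * Real.cosh t)) * Real.cosh t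

/-- The set of `t > 0` with `J₁(√(λ−1) t) ≠ 0` solving the transcendental equation
`t (K₁'(t)/K₁(t) + (λ−1)^{-1/2} J₁'(√(λ−1)t)/J₁(√(λ−1)t)) = λ/(λ−1)`. -/
def aSet (lam : ℝ) : Set ℝ :=
  {t | 0 < t ∧ J1 (Real.sqrt (lam - 1) * t) ≠ 0 ∧
    t * (deriv K1 t / K1 t +
      (1 / Real.sqrt (lam - 1)) *
        (deriv J1 (Real.sqrt (lam - 1) * t) / J1 (Real.sqrt (lam - 1) * t))) = lam / (lam - 1)}

/-- The smallest positive solution `a = a(λ)`. -/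
def aLam (lam : ℝ) : ℝ := sInf (aSet lam)

/-- The stream function `Ψ_L^{λ,W}` of the Lamb dipole, written in polar coordinates
`x₁ = r cos θ`, `x₂ = r sin θ` (so that `sin θ = x₂ / r`). -/
def PsiL (lam W : ℝ) (x : ℝ × ℝ) : ℝ :=
  if rad x ≤ aLam lam then
    ((-(W * aLam lam / (lam - 1)) / J1 (Real.sqrt (lam - 1) * aLam lam)) *
        J1 (Real.sqrt (lam - 1) * rad x) + (W * lam / (lam - 1)) * rad x) * (x.2 / rad x)
  else (W * aLam lam / K1 (aLam lam)) * K1 (rad x) * (x.2 / rad x)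

/-- The Lamb dipole `ω_L^{λ,W} = λ (Ψ_L^{λ,W} − W x₂)₊` restricted to `Π`. -/
def omegaL (lam W : ℝ) (x : ℝ × ℝ) : ℝ :=
  if 0 < x.2 then lam * max (PsiL lam W x - W * x.2) 0 else 0

/-- `ϱ(λ) = (∫_Π ω_L^{λ,1} dx) / I(ω_L^{λ,1})`. -/
def varrho (lam : ℝ) : ℝ := (∫ x in UHP, omegaL lam 1 x) / impulse (omegaL lam 1)

/-- The Laplacian on `ℝ²`, written coordinatewise. -/
def lap (ψ : ℝ × ℝ → ℝ) (x : ℝ × ℝ) : ℝ :=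
  deriv (deriv fun t => ψ (t, x.2)) x.1 + deriv (deriv fun t => ψ (x.1, t)) x.2

/-- Distance (in `L¹ ∩ L²` plus weighted `L¹`) from `ζ` to a set of functions `S`. -/
def distToSet (S : Set ((ℝ × ℝ) → ℝ)) (ζ : (ℝ × ℝ) → ℝ) : ℝ :=
  sInf {d | ∃ ω ∈ S, d = normL1 (fun x => ζ x - ω x) + normL2 (fun x => ζ x - ω x) +
    normL1 (fun x => x.2 * (ζ x - ω x))}

end

noncomputable section AuxLemmas

lemma measurableSet_UHP : MeasurableSet UHP :=
  measurableSet_lt measurable_const measurable_snd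

lemma continuous_rad : Continuous rad := by
  unfold rad
  exact ((continuous_fst.pow 2).add (continuous_snd.pow 2)).sqrt

lemma abs_fst_le_rad (z : ℝ × ℝ) : |z.1| ≤ rad z := by
  rw [rad, ← Real.sqrt_sq_eq_abs]
  exact Real.sqrt_le_sqrt (by nlinarith [sq_nonneg z.2])

lemma sqrt_abs_mul_le_rad (z : ℝ × ℝ) : Real.sqrt |z.1| * Real.sqrt |z.2| ≤ rad z := by
  rw [← Real.sqrt_mul (abs_nonneg _), rad]
  apply Real.sqrt_le_sqrt
  nlinarith [sq_nonneg (|z.1| - |z.2|), sq_abs z.1, sq_abs z.2, abs_nonneg z.1, abs_nonneg z.2]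

lemma rad_pos {z : ℝ × ℝ} (h : z.1 ≠ 0 ∨ z.2 ≠ 0) : 0 < rad z := by
  rw [rad, Real.sqrt_pos]
  rcases h with h | h
  · nlinarith [sq_nonneg z.2, mul_self_pos.2 h, pow_two z.1]
  · nlinarith [sq_nonneg z.1, mul_self_pos.2 h, pow_two z.2]

lemma sq_div_four_le_cosh {t : ℝ} (ht : 0 ≤ t) : t ^ 2 / 4 ≤ Real.cosh t := by
  rw [Real.cosh_eq]
  have h := Real.quadratic_le_exp_of_nonneg ht
  have h2 := Real.exp_pos (-t)
  nlinarith

lemma K0_nonneg (r : ℝ) : 0 ≤ K0 r :=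
  integral_nonneg fun t => (Real.exp_pos _).le

lemma K0_integrand_integrableOn {r : ℝ} (hr : 0 < r) :
    IntegrableOn (fun t => Real.exp (-(r * Real.cosh t))) (Set.Ioi (0 : ℝ)) := by
  have hg : IntegrableOn (fun t : ℝ => Real.exp (-(r / 4) * t ^ 2)) (Set.Ioi (0 : ℝ)) :=
    (integrable_exp_neg_mul_sq (by linarith)).integrableOn
  apply hg.mono' (Continuous.aestronglyMeasurable (by continuity))
  filter_upwards [ae_restrict_mem measurableSet_Ioi] with t ht
  rw [Real.norm_eq_abs, abs_of_pos (Real.exp_pos _)]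
  apply Real.exp_le_exp.2
  have := sq_div_four_le_cosh (le_of_lt ht)
  nlinarith

lemma K0_le {r : ℝ} (hr : 0 < r) : K0 r ≤ 2 * Real.sqrt π / Real.sqrt r := by
  have h1 : K0 r ≤ ∫ t in Set.Ioi (0 : ℝ), Real.exp (-(r / 4) * t ^ 2) := by
    apply integral_mono_of_nonneg (ae_of_all _ fun t => (Real.exp_pos _).le)
      (integrable_exp_neg_mul_sq (by linarith)).integrableOn
    filter_upwards [ae_restrict_mem measurableSet_Ioi] with t ht
    apply Real.exp_le_exp.2
    have := sq_div_four_le_cosh (le_of_lt ht)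
    nlinarith
  have h2 : (∫ t in Set.Ioi (0 : ℝ), Real.exp (-(r / 4) * t ^ 2))
      ≤ ∫ t : ℝ, Real.exp (-(r / 4) * t ^ 2) :=
    setIntegral_le_integral (integrable_exp_neg_mul_sq (by linarith))
      (ae_of_all _ fun t => (Real.exp_pos _).le)
  rw [integral_gaussian] at h2
  have h3 : Real.sqrt (π / (r / 4)) = 2 * Real.sqrt π / Real.sqrt r := by
    rw [show π / (r / 4) = 2 ^ 2 * π / r by ring, Real.sqrt_div (by positivity),
      Real.sqrt_mul (by positivity), Real.sqrt_sq (by norm_num)]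
  linarith [h3 ▸ h2]

lemma K0_anti {r s : ℝ} (hr : 0 < r) (hrs : r ≤ s) : K0 s ≤ K0 r := by
  apply integral_mono_of_nonneg (ae_of_all _ fun t => (Real.exp_pos _).le)
    (K0_integrand_integrableOn hr)
  apply ae_of_all
  intro t
  apply Real.exp_le_exp.2
  nlinarith [Real.one_le_cosh t]

lemma measurable_K0 : Measurable K0 := by
  have h : MeasureTheory.StronglyMeasurable fun p : ℝ × ℝ => Real.exp (-(p.1 * Real.cosh p.2)) :=
    (Real.continuous_exp.comp
      ((continuous_fst.mul (Real.continuous_cosh.comp continuous_snd)).neg)).stronglyMeasurable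
  exact h.integral_prod_right'.measurable

lemma Gker_nonneg (x y : ℝ × ℝ) : 0 ≤ Gker x y :=
  mul_nonneg (by positivity) (K0_nonneg _)

lemma GUHP_le_Gker (x y : ℝ × ℝ) : GUHP x y ≤ Gker x y :=
  sub_le_self _ (Gker_nonneg _ _)

lemma measurable_Gker (x : ℝ × ℝ) : Measurable fun y => Gker x y := by
  unfold Gker
  exact (measurable_K0.comp
    ((continuous_rad.comp (continuous_const.sub continuous_id)).measurable)).const_mul _

lemma GUHP_nonneg {x y : ℝ × ℝ}
    (hx : x ∈ UHP) (hy : y ∈ UHP) (hne : (x - y).1 ≠ 0 ∨ (x - y).2 ≠ 0) :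
    0 ≤ GUHP x y := by
  rw [GUHP, sub_nonneg, Gker, Gker]
  have h1 : 0 < rad (x - y) := rad_pos hne
  have hx2 : 0 < x.2 := hx
  have hy2 : 0 < y.2 := hy
  have h2 : rad (x - y) ≤ rad (reflPt x - y) := by
    rw [rad, rad]
    apply Real.sqrt_le_sqrt
    simp only [reflPt, Prod.fst_sub, Prod.snd_sub]
    nlinarith [mul_pos hx2 hy2]
  exact mul_le_mul_of_nonneg_left (K0_anti h1 h2) (by positivity)

lemma Gker_le {x y : ℝ × ℝ} (h : 0 < rad (x - y)) :
    Gker x y ≤ 1 / (Real.sqrt π * Real.sqrt (rad (x - y))) := by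
  rw [Gker]
  have h1 := K0_le h
  have hπ : 0 < Real.sqrt π := Real.sqrt_pos.2 Real.pi_pos
  have h2 : Real.sqrt π * Real.sqrt π = π := Real.mul_self_sqrt Real.pi_pos.le
  have h3 : 0 < Real.sqrt (rad (x - y)) := Real.sqrt_pos.2 h
  calc (1 / (2 * π)) * K0 (rad (x - y))
      ≤ (1 / (2 * π)) * (2 * Real.sqrt π / Real.sqrt (rad (x - y))) :=
        mul_le_mul_of_nonneg_left h1 (by positivity)
    _ = 1 / (Real.sqrt π * Real.sqrt (rad (x - y))) := by
        field_simp
        linear_combination h2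

lemma sqrt_abs_inv_IntegrableOn_Ioc {δ : ℝ} (hδ : 0 ≤ δ) :
    MeasureTheory.IntegrableOn (fun t : ℝ => (Real.sqrt |t|)⁻¹) (Set.Ioc 0 δ) := by
  have h := (intervalIntegral.intervalIntegrable_rpow' (a := (0:ℝ)) (b := δ)
    (by norm_num : (-1 : ℝ) < -(1/2))).1
  apply h.congr_fun _ measurableSet_Ioc
  intro t ht
  show t ^ (-(1/2) : ℝ) = (Real.sqrt |t|)⁻¹
  rw [abs_of_pos ht.1, Real.sqrt_eq_rpow, ← Real.rpow_neg ht.1.le]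

lemma sqrt_abs_inv_II_right {δ : ℝ} (hδ : 0 ≤ δ) :
    IntervalIntegrable (fun t : ℝ => (Real.sqrt |t|)⁻¹) volume 0 δ := by
  rw [intervalIntegrable_iff_integrableOn_Ioc_of_le hδ]
  exact sqrt_abs_inv_IntegrableOn_Ioc hδ

lemma sqrt_abs_inv_II {δ : ℝ} (hδ : 0 ≤ δ) :
    IntervalIntegrable (fun t : ℝ => (Real.sqrt |t|)⁻¹) volume (-δ) δ := by
  have hr := sqrt_abs_inv_II_right hδ
  have hl : IntervalIntegrable (fun t : ℝ => (Real.sqrt |t|)⁻¹) volume (-δ) 0 := by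
    have h2 := (IntervalIntegrable.iff_comp_neg (by simp)).mp hr
    simp only [abs_neg, neg_zero] at h2
    exact h2.symm
  exact hl.trans hr

lemma sqrt_abs_inv_integral_right {δ : ℝ} (hδ : 0 ≤ δ) :
    ∫ t in (0:ℝ)..δ, (Real.sqrt |t|)⁻¹ = 2 * Real.sqrt δ := by
  have h1 : ∫ t in (0:ℝ)..δ, (Real.sqrt |t|)⁻¹ = ∫ t in (0:ℝ)..δ, t ^ (-(1/2) : ℝ) := by
    rw [intervalIntegral.integral_of_le hδ, intervalIntegral.integral_of_le hδ]
    apply MeasureTheory.setIntegral_congr_fun measurableSet_Ioc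
    intro t ht
    show (Real.sqrt |t|)⁻¹ = t ^ (-(1/2) : ℝ)
    rw [abs_of_pos ht.1, Real.sqrt_eq_rpow, ← Real.rpow_neg ht.1.le]
  rw [h1, integral_rpow (Or.inl (by norm_num : (-1:ℝ) < -(1/2)))]
  norm_num
  rw [← Real.sqrt_eq_rpow]
  ring

lemma sqrt_abs_inv_integral {δ : ℝ} (hδ : 0 ≤ δ) :
    ∫ t in (-δ)..δ, (Real.sqrt |t|)⁻¹ = 4 * Real.sqrt δ := by
  have hl : ∫ t in (-δ)..(0:ℝ), (Real.sqrt |t|)⁻¹ = 2 * Real.sqrt δ := by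
    have h := intervalIntegral.integral_comp_neg (a := -δ) (b := (0:ℝ))
      (fun t : ℝ => (Real.sqrt |t|)⁻¹)
    simp only [abs_neg, neg_zero, neg_neg] at h
    rw [h, sqrt_abs_inv_integral_right hδ]
  have hlII : IntervalIntegrable (fun t : ℝ => (Real.sqrt |t|)⁻¹) volume (-δ) 0 := by
    have h2 := (IntervalIntegrable.iff_comp_neg (by simp)).mp (sqrt_abs_inv_II_right hδ)
    simp only [abs_neg, neg_zero] at h2
    exact h2.symm
  rw [← intervalIntegral.integral_add_adjacent_intervals hlII (sqrt_abs_inv_II_right hδ),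
    hl, sqrt_abs_inv_integral_right hδ]
  ring

lemma oneD_integrableOn {a δ : ℝ} (hδ : 0 ≤ δ) :
    MeasureTheory.IntegrableOn (fun t : ℝ => (Real.sqrt |t - a|)⁻¹) (Set.Icc (a - δ) (a + δ)) := by
  have h := (sqrt_abs_inv_II hδ).comp_sub_right a
  have h2 : IntervalIntegrable (fun t : ℝ => (Real.sqrt |t - a|)⁻¹) volume (a - δ) (a + δ) := by
    convert h using 1 <;> ring
  rw [integrableOn_Icc_iff_integrableOn_Ioc]
  exact (intervalIntegrable_iff_integrableOn_Ioc_of_le (by linarith)).1 h2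

lemma oneD_integral {a δ : ℝ} (hδ : 0 ≤ δ) :
    ∫ t in Set.Icc (a - δ) (a + δ), (Real.sqrt |t - a|)⁻¹ = 4 * Real.sqrt δ := by
  rw [MeasureTheory.integral_Icc_eq_integral_Ioc,
    ← intervalIntegral.integral_of_le (by linarith : a - δ ≤ a + δ)]
  have h := intervalIntegral.integral_comp_sub_right (a := a - δ) (b := a + δ)
    (fun t : ℝ => (Real.sqrt |t|)⁻¹) a
  rw [show a - δ - a = -δ by ring, show a + δ - a = δ by ring] at h
  exact h.trans (sqrt_abs_inv_integral hδ)

end AuxLemmas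

set_option maxHeartbeats 2000000 in
/-- `E(ω) ≤ C ‖ω‖₁^{3/2} ‖ω‖₂^{1/2}`. -/
theorem stmt1 :
    ∃ C : ℝ, 0 < C ∧ ∀ ω : ℝ × ℝ → ℝ, NonnegL1L2 ω →
      kineticE ω ≤ C * normL1 ω ^ ((3 : ℝ) / 2) * normL2 ω ^ ((1 : ℝ) / 2) := by
  refine ⟨3, by norm_num, fun ω hω => ?_⟩
  obtain ⟨hnn, hL1, hL2⟩ := hω
  have hωmeas : AEStronglyMeasurable ω (volume.restrict UHP) := hL1.aestronglyMeasurable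
  have hN1_eq : normL1 ω = ∫ x in UHP, ω x := by
    rw [normL1]
    exact setIntegral_congr_fun measurableSet_UHP fun x hx => abs_of_nonneg (hnn x hx)
  have hN2_eq : normL2 ω = Real.sqrt (∫ x in UHP, (ω x) ^ 2) := by
    rw [normL2, ← Real.sqrt_eq_rpow]
  set N1 : ℝ := ∫ x in UHP, ω x with hN1def
  set N2sq : ℝ := ∫ x in UHP, (ω x) ^ 2 with hN2def
  have hN1_nonneg : 0 ≤ N1 := setIntegral_nonneg measurableSet_UHP hnn
  have hN2sq_nonneg : 0 ≤ N2sq := setIntegral_nonneg measurableSet_UHP fun x _ => sq_nonneg _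
  have hωae : 0 ≤ᵐ[volume.restrict UHP] ω :=
    (ae_restrict_iff' measurableSet_UHP).2 (ae_of_all _ hnn)
  have hRHS_nonneg : 0 ≤ 3 * normL1 ω ^ ((3 : ℝ) / 2) * normL2 ω ^ ((1 : ℝ) / 2) := by
    have h1 : (0:ℝ) ≤ normL1 ω := setIntegral_nonneg measurableSet_UHP fun x _ => abs_nonneg _
    have h2 : (0:ℝ) ≤ normL2 ω := by
      rw [hN2_eq]; exact Real.sqrt_nonneg _
    exact mul_nonneg (mul_nonneg (by norm_num) (Real.rpow_nonneg h1 _)) (Real.rpow_nonneg h2 _)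
  by_cases hcrit : N2sq = 0
  · -- degenerate case : `ω = 0` a.e. on `UHP`
    have hz : ω =ᵐ[volume.restrict UHP] 0 := by
      have h2 : (fun x => (ω x) ^ 2) =ᵐ[volume.restrict UHP] 0 :=
        (integral_eq_zero_iff_of_nonneg_ae (ae_of_all _ fun x => sq_nonneg _) hL2).1 hcrit
      filter_upwards [h2] with x hx
      exact pow_eq_zero_iff (n := 2) (by norm_num) |>.1 hx
    have hGop : ∀ x, Gop ω x = 0 := by
      intro x
      rw [Gop]
      apply integral_eq_zero_of_ae
      filter_upwards [hz] with y hy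
      simp [hy]
    have hE : kineticE ω = 0 := by
      rw [kineticE]
      have h0 : (fun x => ω x * Gop ω x) = fun _ => (0:ℝ) := by
        funext z; rw [hGop z, mul_zero]
      rw [h0]
      simp
    rw [hE]
    exact hRHS_nonneg
  -- main case
  have hN2sq_pos : 0 < N2sq := lt_of_le_of_ne hN2sq_nonneg (Ne.symm hcrit)
  have hN1_pos : 0 < N1 := by
    rcases eq_or_lt_of_le hN1_nonneg with h | h
    · exfalso
      apply hcrit
      have hz : ω =ᵐ[volume.restrict UHP] 0 :=
        (integral_eq_zero_iff_of_nonneg_ae hωae hL1).1 h.symm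
      rw [hN2def]
      apply integral_eq_zero_of_ae
      filter_upwards [hz] with y hy
      simp [hy]
    · exact h
  set N2 : ℝ := Real.sqrt N2sq with hN2def'
  have hN2_pos : 0 < N2 := Real.sqrt_pos.2 hN2sq_pos
  set δ : ℝ := N1 / N2 with hδdef
  have hδ_pos : 0 < δ := div_pos hN1_pos hN2_pos
  have hsqπ : 0 < Real.sqrt π := Real.sqrt_pos.2 Real.pi_pos
  set B : ℝ := Real.sqrt (16 * δ / π) * N2 + 1 / (Real.sqrt π * Real.sqrt δ) * N1 with hBdef
  -- the key pointwise estimate on the stream function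
  have key : ∀ x ∈ UHP, 0 ≤ Gop ω x ∧ Gop ω x ≤ B := by
    intro x hx
    -- a.e. the coordinates differ from those of `x`
    have hae1 : ∀ᵐ y : ℝ × ℝ, y.1 ≠ x.1 := by
      rw [ae_iff]
      have hset : {y : ℝ × ℝ | ¬y.1 ≠ x.1} = {x.1} ×ˢ (Set.univ : Set ℝ) := by
        ext y
        simp only [Set.mem_setOf_eq, not_not, Set.mem_prod, Set.mem_singleton_iff,
          Set.mem_univ, and_true]
      rw [hset, Measure.volume_eq_prod, Measure.prod_prod, measure_singleton, zero_mul]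
    have hae2 : ∀ᵐ y : ℝ × ℝ, y.2 ≠ x.2 := by
      rw [ae_iff]
      have hset : {y : ℝ × ℝ | ¬y.2 ≠ x.2} = (Set.univ : Set ℝ) ×ˢ {x.2} := by
        ext y
        simp only [Set.mem_setOf_eq, not_not, Set.mem_prod, Set.mem_singleton_iff,
          Set.mem_univ, true_and]
      rw [hset, Measure.volume_eq_prod, Measure.prod_prod, measure_singleton, mul_zero]
    -- the near set
    set S : Set (ℝ × ℝ) := {y | rad (x - y) ≤ δ} with hSdef
    have hSmeas : MeasurableSet S :=
      measurableSet_le ((continuous_rad.comp (continuous_const.sub continuous_id)).measurable)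
        measurable_const
    have hS1meas : MeasurableSet (S ∩ UHP) := hSmeas.inter measurableSet_UHP
    have hS2meas : MeasurableSet (Sᶜ ∩ UHP) := hSmeas.compl.inter measurableSet_UHP
    set R : Set (ℝ × ℝ) :=
      Set.Icc (x.1 - δ) (x.1 + δ) ×ˢ Set.Icc (x.2 - δ) (x.2 + δ) with hRdef
    have hSR : S ⊆ R := by
      intro y hy
      have h1 : |y.1 - x.1| ≤ δ := by
        have := abs_fst_le_rad (x - y)
        rw [Prod.fst_sub] at this
        rw [abs_sub_comm]
        exact le_trans this hy
      have h2 : |y.2 - x.2| ≤ δ := by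
        have hx2 := abs_fst_le_rad ((x - y).2, (x - y).1)
        simp only [rad] at hx2 ⊢
        have h3 : |(x - y).2| ≤ rad (x - y) := by
          rw [rad]
          rw [show (x-y).2 ^ 2 + (x-y).1 ^ 2 = (x-y).1 ^ 2 + (x-y).2 ^ 2 by ring] at hx2
          exact hx2
        rw [Prod.snd_sub] at h3
        rw [abs_sub_comm]
        exact le_trans h3 hy
      exact ⟨by rw [Set.mem_Icc]; constructor <;> [linarith [abs_le.1 h1 |>.1];
        linarith [abs_le.1 h1 |>.2]],
        by rw [Set.mem_Icc]; constructor <;> [linarith [abs_le.1 h2 |>.1];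
        linarith [abs_le.1 h2 |>.2]]⟩
    -- the comparison kernel
    set H : ℝ × ℝ → ℝ :=
      fun y => (1 / π) * ((Real.sqrt |y.1 - x.1|)⁻¹ * (Real.sqrt |y.2 - x.2|)⁻¹) with hHdef
    have hH_nonneg : ∀ y, 0 ≤ H y := fun y => by rw [hHdef]; positivity
    have hH_int : IntegrableOn H R := by
      rw [hRdef, IntegrableOn, Measure.volume_eq_prod, ← Measure.prod_restrict]
      exact (((oneD_integrableOn (a := x.1) hδ_pos.le).mul_prod
        (oneD_integrableOn (a := x.2) hδ_pos.le))).const_mul _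
    have hH_val : ∫ y in R, H y = 16 * δ / π := by
      rw [hRdef]
      calc ∫ y in Set.Icc (x.1 - δ) (x.1 + δ) ×ˢ Set.Icc (x.2 - δ) (x.2 + δ), H y
          = (1 / π) * ∫ y in Set.Icc (x.1 - δ) (x.1 + δ) ×ˢ Set.Icc (x.2 - δ) (x.2 + δ),
            ((Real.sqrt |y.1 - x.1|)⁻¹ * (Real.sqrt |y.2 - x.2|)⁻¹) := by
            rw [hHdef, integral_const_mul]
        _ = (1 / π) * ((4 * Real.sqrt δ) * (4 * Real.sqrt δ)) := by
            rw [Measure.volume_eq_prod, setIntegral_prod_mul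
              (fun t : ℝ => (Real.sqrt |t - x.1|)⁻¹) (fun t : ℝ => (Real.sqrt |t - x.2|)⁻¹),
              oneD_integral hδ_pos.le, oneD_integral hδ_pos.le]
        _ = 16 * δ / π := by
            rw [show (4 * Real.sqrt δ) * (4 * Real.sqrt δ)
              = 16 * (Real.sqrt δ * Real.sqrt δ) by ring, Real.mul_self_sqrt hδ_pos.le]
            ring
    -- the squared kernel is dominated by `H` a.e.
    have hbound : ∀ᵐ y : ℝ × ℝ, Gker x y ^ 2 ≤ H y := by
      filter_upwards [hae1, hae2] with y h1 h2
      have hne1 : (x - y).1 ≠ 0 := by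
        rw [Prod.fst_sub]; exact sub_ne_zero.2 (Ne.symm h1)
      have hne2 : (x - y).2 ≠ 0 := by
        rw [Prod.snd_sub]; exact sub_ne_zero.2 (Ne.symm h2)
      have hr : 0 < rad (x - y) := rad_pos (Or.inl hne1)
      have ha : 0 < Real.sqrt |y.1 - x.1| :=
        Real.sqrt_pos.2 (abs_pos.2 (sub_ne_zero.2 h1))
      have hb : 0 < Real.sqrt |y.2 - x.2| :=
        Real.sqrt_pos.2 (abs_pos.2 (sub_ne_zero.2 h2))
      have hprod : Real.sqrt |y.1 - x.1| * Real.sqrt |y.2 - x.2| ≤ rad (x - y) := by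
        have := sqrt_abs_mul_le_rad (x - y)
        rw [Prod.fst_sub, Prod.snd_sub, abs_sub_comm x.1 y.1, abs_sub_comm x.2 y.2] at this
        exact this
      have hG := Gker_le hr
      calc Gker x y ^ 2 ≤ (1 / (Real.sqrt π * Real.sqrt (rad (x - y)))) ^ 2 :=
            pow_le_pow_left₀ (Gker_nonneg x y) hG 2
        _ = 1 / (π * rad (x - y)) := by
            rw [div_pow, one_pow, mul_pow, Real.sq_sqrt Real.pi_pos.le, Real.sq_sqrt hr.le]
        _ ≤ 1 / (π * (Real.sqrt |y.1 - x.1| * Real.sqrt |y.2 - x.2|)) := by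
            apply one_div_le_one_div_of_le (by positivity)
            exact mul_le_mul_of_nonneg_left hprod Real.pi_pos.le
        _ = H y := by
            rw [hHdef]
            field_simp
    -- integrability of `Gker x · ^ 2` on the near region
    have hGsq_meas : AEStronglyMeasurable (fun y => Gker x y ^ 2)
        (volume.restrict (S ∩ UHP)) :=
      (((measurable_Gker x).pow_const 2)).aestronglyMeasurable
    have hH_int_S1 : IntegrableOn H (S ∩ UHP) :=
      hH_int.mono_set (Set.Subset.trans Set.inter_subset_left hSR)
    have hGsq_int : IntegrableOn (fun y => Gker x y ^ 2) (S ∩ UHP) := by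
      apply hH_int_S1.mono' hGsq_meas
      filter_upwards [ae_restrict_of_ae hbound] with y hy
      rw [Real.norm_eq_abs, abs_of_nonneg (sq_nonneg _)]
      exact hy
    have hGsq_val : ∫ y in S ∩ UHP, Gker x y ^ 2 ≤ 16 * δ / π := by
      calc ∫ y in S ∩ UHP, Gker x y ^ 2 ≤ ∫ y in S ∩ UHP, H y :=
            integral_mono_of_nonneg (ae_of_all _ fun y => sq_nonneg _) hH_int_S1
              (ae_restrict_of_ae hbound)
        _ ≤ ∫ y in R, H y := setIntegral_mono_set hH_int
            (ae_of_all _ hH_nonneg)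
            (HasSubset.Subset.eventuallyLE (Set.Subset.trans Set.inter_subset_left hSR))
        _ = 16 * δ / π := hH_val
    -- integrability of the integrand on UHP
    have hωmeas_S1 : AEStronglyMeasurable ω (volume.restrict (S ∩ UHP)) :=
      hωmeas.mono_measure (Measure.restrict_mono Set.inter_subset_right le_rfl)
    have hωmeas_S2 : AEStronglyMeasurable ω (volume.restrict (Sᶜ ∩ UHP)) :=
      hωmeas.mono_measure (Measure.restrict_mono Set.inter_subset_right le_rfl)
    have hωsq_S1 : IntegrableOn (fun y => ω y ^ 2) (S ∩ UHP) :=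
      hL2.mono_set Set.inter_subset_right
    have hInear : IntegrableOn (fun y => Gker x y * ω y) (S ∩ UHP) := by
      apply (hGsq_int.add hωsq_S1).mono'
        (((measurable_Gker x).aestronglyMeasurable.mono_measure
          (le_refl _)).mul hωmeas_S1)
      apply ae_of_all
      intro y
      simp only [Pi.mul_apply, Pi.add_apply, Real.norm_eq_abs, abs_mul]
      nlinarith [sq_nonneg (|Gker x y| - |ω y|), sq_abs (Gker x y), sq_abs (ω y),
        abs_nonneg (Gker x y), abs_nonneg (ω y)]
    have hptfar : ∀ y ∈ Sᶜ ∩ UHP, Gker x y * ω y ≤ 1 / (Real.sqrt π * Real.sqrt δ) * ω y := by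
      intro y hy
      have hrad : δ < rad (x - y) := not_le.1 hy.1
      apply mul_le_mul_of_nonneg_right _ (hnn y hy.2)
      refine le_trans (Gker_le (lt_trans hδ_pos hrad)) ?_
      apply one_div_le_one_div_of_le (by positivity)
      exact mul_le_mul_of_nonneg_left (Real.sqrt_le_sqrt hrad.le) hsqπ.le
    have hIfar : IntegrableOn (fun y => Gker x y * ω y) (Sᶜ ∩ UHP) := by
      apply ((hL1.mono_set Set.inter_subset_right).const_mul
        (1 / (Real.sqrt π * Real.sqrt δ))).mono'
        (((measurable_Gker x).aestronglyMeasurable.mono_measure (le_refl _)).mul hωmeas_S2)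
      filter_upwards [ae_restrict_mem hS2meas] with y hy
      simp only [Pi.mul_apply, Real.norm_eq_abs]
      rw [abs_of_nonneg (mul_nonneg (Gker_nonneg x y) (hnn y hy.2))]
      exact hptfar y hy
    have hUHP_split : UHP = (S ∩ UHP) ∪ (Sᶜ ∩ UHP) := by
      rw [← Set.union_inter_distrib_right, Set.union_compl_self, Set.univ_inter]
    have hIntUHP : IntegrableOn (fun y => Gker x y * ω y) UHP := by
      rw [hUHP_split]
      exact hInear.union hIfar
    have hsplit : ∫ y in UHP, Gker x y * ω y
        = (∫ y in S ∩ UHP, Gker x y * ω y) + ∫ y in Sᶜ ∩ UHP, Gker x y * ω y := by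
      have h := setIntegral_union (f := fun y => Gker x y * ω y)
        (Disjoint.mono Set.inter_subset_left Set.inter_subset_left
        disjoint_compl_right) hS2meas hInear hIfar
      rw [← hUHP_split] at h
      exact h
    -- near-field estimate via Cauchy-Schwarz
    have hnear : ∫ y in S ∩ UHP, Gker x y * ω y ≤ Real.sqrt (16 * δ / π) * N2 := by
      have hpq : Real.HolderConjugate 2 2 := Real.holderConjugate_iff.mpr ⟨one_lt_two, by norm_num⟩
      have h2 : ENNReal.ofReal (2:ℝ) = 2 := by norm_num
      have hmemG : MemLp (fun y => Gker x y) (ENNReal.ofReal (2:ℝ))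
          (volume.restrict (S ∩ UHP)) := by
        rw [h2]
        exact (memLp_two_iff_integrable_sq
          ((measurable_Gker x).aestronglyMeasurable)).2 hGsq_int
      have hmemω : MemLp ω (ENNReal.ofReal (2:ℝ)) (volume.restrict (S ∩ UHP)) := by
        rw [h2]
        exact (memLp_two_iff_integrable_sq hωmeas_S1).2 hωsq_S1
      have hh := integral_mul_le_Lp_mul_Lq_of_nonneg hpq
        (ae_of_all _ fun y => Gker_nonneg x y)
        ((ae_restrict_iff' hS1meas).2 (ae_of_all _ fun y hy => hnn y hy.2)) hmemG hmemω
      simp_rw [show (2:ℝ) = ((2:ℕ):ℝ) by norm_num, Real.rpow_natCast] at hh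
      refine le_trans hh ?_
      have hfst : (∫ y in S ∩ UHP, Gker x y ^ 2) ^ ((1:ℝ)/2)
          ≤ Real.sqrt (16 * δ / π) := by
        rw [Real.sqrt_eq_rpow]
        exact Real.rpow_le_rpow (setIntegral_nonneg hS1meas fun y _ => sq_nonneg _)
          hGsq_val (by norm_num)
      have hsnd : (∫ y in S ∩ UHP, ω y ^ 2) ^ ((1:ℝ)/2) ≤ N2 := by
        rw [hN2def', Real.sqrt_eq_rpow]
        apply Real.rpow_le_rpow (setIntegral_nonneg hS1meas fun y _ => sq_nonneg _)
          _ (by norm_num)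
        exact setIntegral_mono_set hL2
          ((ae_restrict_iff' measurableSet_UHP).2 (ae_of_all _ fun y _ => sq_nonneg _))
          (HasSubset.Subset.eventuallyLE Set.inter_subset_right)
      have hfst_nonneg : (0:ℝ) ≤ (∫ y in S ∩ UHP, Gker x y ^ 2) ^ ((1:ℝ)/2) :=
        Real.rpow_nonneg (setIntegral_nonneg hS1meas fun y _ => sq_nonneg _) _
      have hsnd_nonneg : (0:ℝ) ≤ (∫ y in S ∩ UHP, ω y ^ 2) ^ ((1:ℝ)/2) :=
        Real.rpow_nonneg (setIntegral_nonneg hS1meas fun y _ => sq_nonneg _) _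
      exact mul_le_mul hfst hsnd hsnd_nonneg (Real.sqrt_nonneg _)
    -- far-field estimate
    have hfar : ∫ y in Sᶜ ∩ UHP, Gker x y * ω y ≤ 1 / (Real.sqrt π * Real.sqrt δ) * N1 := by
      calc ∫ y in Sᶜ ∩ UHP, Gker x y * ω y
          ≤ ∫ y in Sᶜ ∩ UHP, 1 / (Real.sqrt π * Real.sqrt δ) * ω y :=
            setIntegral_mono_on hIfar
              ((hL1.mono_set Set.inter_subset_right).const_mul _) hS2meas hptfar
        _ = 1 / (Real.sqrt π * Real.sqrt δ) * ∫ y in Sᶜ ∩ UHP, ω y := integral_const_mul _ _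
        _ ≤ 1 / (Real.sqrt π * Real.sqrt δ) * N1 := by
            apply mul_le_mul_of_nonneg_left _ (by positivity)
            exact setIntegral_mono_set hL1 hωae
              (HasSubset.Subset.eventuallyLE Set.inter_subset_right)
    -- nonnegativity of the integrand of `Gop`
    have hGop_integrand_nonneg : 0 ≤ᵐ[volume.restrict UHP] fun y => GUHP x y * ω y := by
      filter_upwards [ae_restrict_of_ae hae1, ae_restrict_mem measurableSet_UHP] with y h1 h2
      have hne1 : (x - y).1 ≠ 0 := by
        rw [Prod.fst_sub]; exact sub_ne_zero.2 (Ne.symm h1)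
      exact mul_nonneg (GUHP_nonneg hx h2 (Or.inl hne1)) (hnn y h2)
    constructor
    · exact integral_nonneg_of_ae hGop_integrand_nonneg
    · have hGle : Gop ω x ≤ ∫ y in UHP, Gker x y * ω y := by
        rw [Gop]
        apply integral_mono_of_nonneg hGop_integrand_nonneg hIntUHP
        filter_upwards [ae_restrict_mem measurableSet_UHP] with y hy
        exact mul_le_mul_of_nonneg_right (GUHP_le_Gker x y) (hnn y hy)
      rw [hBdef]
      calc Gop ω x ≤ ∫ y in UHP, Gker x y * ω y := hGle
        _ = (∫ y in S ∩ UHP, Gker x y * ω y) + ∫ y in Sᶜ ∩ UHP, Gker x y * ω y := hsplit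
        _ ≤ Real.sqrt (16 * δ / π) * N2 + 1 / (Real.sqrt π * Real.sqrt δ) * N1 :=
            add_le_add hnear hfar

  -- the outer integral
  have houter : (∫ x in UHP, ω x * Gop ω x) ≤ B * N1 := by
    calc (∫ x in UHP, ω x * Gop ω x) ≤ ∫ x in UHP, ω x * B := by
          apply integral_mono_of_nonneg
          · filter_upwards [ae_restrict_mem measurableSet_UHP] with z hz
            exact mul_nonneg (hnn z hz) (key z hz).1
          · exact hL1.mul_const B
          · filter_upwards [ae_restrict_mem measurableSet_UHP] with z hz
            exact mul_le_mul_of_nonneg_left (key z hz).2 (hnn z hz)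
      _ = B * N1 := by rw [integral_mul_const]; ring
  -- final arithmetic
  rw [kineticE, hN1_eq, hN2_eq]
  have hEle : (1:ℝ)/2 * (∫ x in UHP, ω x * Gop ω x) ≤ (1:ℝ)/2 * (B * N1) := by
    apply mul_le_mul_of_nonneg_left houter (by norm_num)
  refine le_trans hEle ?_
  -- now pure arithmetic:  (1/2) * B * N1 ≤ 3 * N1^{3/2} * N2^{1/2}
  set a : ℝ := Real.sqrt N1 with hadef
  set b : ℝ := Real.sqrt N2 with hbdef
  set p : ℝ := Real.sqrt π with hpdef
  have ha_pos : 0 < a := Real.sqrt_pos.2 hN1_pos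
  have hb_pos : 0 < b := Real.sqrt_pos.2 hN2_pos
  have ha2 : a * a = N1 := Real.mul_self_sqrt hN1_pos.le
  have hb2 : b * b = N2 := Real.mul_self_sqrt hN2_pos.le
  have hp2 : p * p = π := Real.mul_self_sqrt Real.pi_pos.le
  have hp_one : 1 ≤ p := by
    nlinarith [Real.pi_gt_three, hsqπ, hp2]
  clear_value N1 N2sq N2 δ B a b p
  have hδsqrt : Real.sqrt δ = a / b := by
    rw [hδdef, Real.sqrt_div hN1_pos.le, hadef, hbdef]
  have h16 : Real.sqrt (16 * δ / π) = 4 * a / (b * p) := by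
    rw [show 16 * δ / π = 16 * (δ / π) by ring, Real.sqrt_mul (by norm_num : (0:ℝ) ≤ 16),
      Real.sqrt_div hδ_pos.le, hδsqrt, show (16:ℝ) = 4 ^ 2 by norm_num,
      Real.sqrt_sq (by norm_num : (0:ℝ) ≤ 4)]
    rw [← hpdef]
    ring
  have hBval : B = 5 * a * b / p := by
    rw [hBdef, h16, hδsqrt, ← ha2, ← hb2]
    field_simp
    ring
  have hpow1 : N1 ^ ((3:ℝ)/2) = N1 * a := by
    rw [show (3:ℝ)/2 = 1 + 1/2 by norm_num, Real.rpow_add hN1_pos, Real.rpow_one,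
      hadef, Real.sqrt_eq_rpow]
  have hpow2 : N2 ^ ((1:ℝ)/2) = b := by
    rw [hbdef, Real.sqrt_eq_rpow]
  rw [hBval, hpow1, hpow2]
  rw [show N1 = a * a from ha2.symm]
  have h5 : 5 * a * b / p ≤ 5 * a * b := div_le_self (by positivity) hp_one
  nlinarith [mul_le_mul_of_nonneg_right h5 (mul_nonneg ha_pos.le ha_pos.le),
    mul_pos (mul_pos ha_pos ha_pos) (mul_pos ha_pos hb_pos)]
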